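/- Let A be a symmetric positive definite n×n real matrix and B an m×n real matrix of full row rank m (m ≤ n), and set S := B A⁻¹ Bᵀ (which is symmetric positive definite). Let 𝒜 := [[A, Bᵀ], [B, 0]] be the saddle-point matrix and P₁ := [[A, 0], [0, S]] the block diagonal ideal preconditioner. Then every eigenvalue λ of P₁⁻¹ 𝒜 is real and belongs to the set {1, (1 + √5)/2, (1 − √5)/2}. -/

import Mathlib

open Matrix

/-- Ideal block diagonal preconditioning of a saddle-point matrix: with `A` symmetric
positive definite, `B` of full row rank, `S = B A⁻¹ Bᵀ`, `𝒜 = [[A, Bᵀ], [B, 0]]` and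
`P₁ = [[A, 0], [0, S]]`, every eigenvalue of `P₁⁻¹ 𝒜` is real and belongs to
`{1, (1 + √5)/2, (1 - √5)/2}`. -/
theorem ideal_block_diag_precond_eigs {n m : ℕ}
    (A : Matrix (Fin n) (Fin n) ℝ) (hA : A.PosDef)
    (B : Matrix (Fin m) (Fin n) ℝ) (hB : B.rank = m)
    (μ : ℂ) (v : (Fin n ⊕ Fin m) → ℂ) (hv : v ≠ 0)
    (heig : (((Matrix.fromBlocks A 0 0 (B * A⁻¹ * Bᵀ))⁻¹ *
        Matrix.fromBlocks A Bᵀ B 0).map Complex.ofReal) *ᵥ v = μ • v) :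
    μ = 1 ∨ μ = (((1 + Real.sqrt 5) / 2 : ℝ) : ℂ) ∨
      μ = (((1 - Real.sqrt 5) / 2 : ℝ) : ℂ) := by
  set S : Matrix (Fin m) (Fin m) ℝ := B * A⁻¹ * Bᵀ with hSdef
  -- rows of `B` are linearly independent
  have hrows : LinearIndependent ℝ (fun i => B i) := by
    rw [linearIndependent_iff_card_eq_finrank_span]
    rw [Set.finrank, show (fun i => B i) = B.row from rfl, ← B.rank_eq_finrank_span_row, hB, Fintype.card_fin]
  -- `Bᵀ *ᵥ ·` is injective
  have hBt : ∀ x : Fin m → ℝ, x ≠ 0 → Bᵀ *ᵥ x ≠ 0 := by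
    intro x hx h0
    have hinj := Matrix.vecMul_injective_iff.mpr hrows
    apply hx
    apply hinj
    show x ᵥ* B = 0 ᵥ* B
    rw [Matrix.zero_vecMul, ← Matrix.mulVec_transpose]
    exact h0
  -- `S` is positive definite
  have hSpd : S.PosDef := by
    refine Matrix.PosDef.of_dotProduct_mulVec_pos ?_ ?_
    · have h1 : A⁻¹.IsHermitian := hA.isHermitian.inv
      rw [hSdef]
      have := Matrix.isHermitian_mul_mul_conjTranspose (A := A⁻¹) B h1
      simpa [Matrix.conjTranspose_eq_transpose_of_trivial] using this
    · intro x hx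
      have hy := hA.inv.dotProduct_mulVec_pos (hBt x hx)
      have hrw : star x ⬝ᵥ S *ᵥ x = star (Bᵀ *ᵥ x) ⬝ᵥ A⁻¹ *ᵥ (Bᵀ *ᵥ x) := by
        simp only [star_trivial, hSdef, ← Matrix.mulVec_mulVec]
        rw [Matrix.dotProduct_mulVec x B, ← Matrix.mulVec_transpose]
      rw [hrw]
      exact hy
  have hAu : IsUnit A := hA.isUnit
  have hSu : IsUnit S := hSpd.isUnit
  haveI : Invertible A := hAu.invertible
  haveI : Invertible S := hSu.invertible
  set C : Matrix (Fin n) (Fin m) ℝ := A⁻¹ * Bᵀ with hC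
  set D : Matrix (Fin m) (Fin n) ℝ := S⁻¹ * B with hD
  set N : Matrix (Fin n ⊕ Fin m) (Fin n ⊕ Fin m) ℝ := fromBlocks 1 C D 0 with hN
  have hDC : D * C = 1 := by
    rw [hD, hC, Matrix.mul_assoc, ← Matrix.mul_assoc B, ← hSdef,
      Matrix.inv_mul_of_invertible]
  -- the block-diagonal preconditioner
  set P : Matrix (Fin n ⊕ Fin m) (Fin n ⊕ Fin m) ℝ := fromBlocks A 0 0 S with hP
  haveI : Invertible P := by
    refine ⟨fromBlocks A⁻¹ 0 0 S⁻¹, ?_, ?_⟩ <;>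
      simp [hP, Matrix.fromBlocks_multiply, ← Matrix.fromBlocks_one]
  have hPN : P * N = fromBlocks A Bᵀ B 0 := by
    simp [hP, hN, hC, hD, Matrix.fromBlocks_multiply, ← Matrix.mul_assoc]
  have hNval : P⁻¹ * fromBlocks A Bᵀ B 0 = N := by
    rw [← hPN, Matrix.inv_mul_cancel_left_of_invertible]
  -- the cubic matrix identity
  have hNN : N * N = fromBlocks (1 + C * D) C D 1 := by
    simp [hN, Matrix.fromBlocks_multiply, hDC]
  have hq : N * N * N + 1 = N * N + N * N := by
    rw [hNN, hN]
    simp [Matrix.fromBlocks_multiply, Matrix.fromBlocks_add, hDC, Matrix.add_mul,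
      Matrix.mul_assoc, ← Matrix.fromBlocks_one]
    abel
  -- move to ℂ
  set Nc : Matrix (Fin n ⊕ Fin m) (Fin n ⊕ Fin m) ℂ := N.map Complex.ofReal with hNc
  have hmap : ∀ X Y : Matrix (Fin n ⊕ Fin m) (Fin n ⊕ Fin m) ℝ,
      (X * Y).map Complex.ofReal = X.map Complex.ofReal * Y.map Complex.ofReal := by
    intro X Y
    exact Matrix.map_mul (f := Complex.ofRealHom)
  have hone : (1 : Matrix (Fin n ⊕ Fin m) (Fin n ⊕ Fin m) ℝ).map Complex.ofReal = 1 :=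
    Matrix.map_one _ Complex.ofReal_zero Complex.ofReal_one
  have hqc : Nc * Nc * Nc + 1 = Nc * Nc + Nc * Nc := by
    have := congrArg (fun M : Matrix (Fin n ⊕ Fin m) (Fin n ⊕ Fin m) ℝ =>
      M.map Complex.ofReal) hq
    simpa [Matrix.map_add, hmap, hone, hNc] using this
  have heig' : Nc *ᵥ v = μ • v := by
    rw [hNc, ← hNval]
    exact heig
  have h2 : (Nc * Nc) *ᵥ v = (μ ^ 2) • v := by
    rw [← Matrix.mulVec_mulVec, heig', Matrix.mulVec_smul, heig', smul_smul, ← sq]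
  have h3 : (Nc * Nc * Nc) *ᵥ v = (μ ^ 3) • v := by
    rw [← Matrix.mulVec_mulVec, heig', Matrix.mulVec_smul, h2, smul_smul, ← pow_succ']
  have hvec := congrArg (fun M => M *ᵥ v) hqc
  simp only [Matrix.add_mulVec, Matrix.one_mulVec, h2, h3] at hvec
  have hsmul : (μ ^ 3 + 1 - (μ ^ 2 + μ ^ 2)) • v = 0 := by
    rw [sub_smul, add_smul, add_smul, one_smul, hvec, sub_self]
  have hpoly : μ ^ 3 + 1 - (μ ^ 2 + μ ^ 2) = 0 := by
    rcases smul_eq_zero.mp hsmul with h | h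
    · exact h
    · exact absurd h hv
  -- factor the cubic
  set s : ℂ := ((Real.sqrt 5 : ℝ) : ℂ) with hs
  have hs2 : s ^ 2 = 5 := by
    rw [hs, ← Complex.ofReal_pow, Real.sq_sqrt (by norm_num : (0:ℝ) ≤ 5)]
    norm_num
  have hfac : (μ - 1) * ((μ - (1 + s) / 2) * (μ - (1 - s) / 2)) = 0 := by
    linear_combination hpoly + (1 / 4 - μ / 4) * hs2
  rcases mul_eq_zero.mp hfac with h | h
  · exact Or.inl (sub_eq_zero.mp h)
  · rcases mul_eq_zero.mp h with h' | h'
    · refine Or.inr (Or.inl ?_)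
      rw [sub_eq_zero] at h'
      rw [h']
      push_cast [hs]
      ring
    · refine Or.inr (Or.inr ?_)
      rw [sub_eq_zero] at h'
      rw [h']
      push_cast [hs]
      ring
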